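/- Let G be a t-connected chordal graph with t ≥ 2 and threshold function θ with θ(x) ≤ t for every vertex x and θ(v) < t for at least one vertex v. Then min-seed(G, θ) < t. -/

import Mathlib

/-- A set `A` is closed under activation: every vertex with at least `θ v`
neighbors in `A` already belongs to `A`. -/
def activationClosed {V : Type*} [Fintype V] (G : SimpleGraph V) (θ : V → ℤ)
    (A : Set V) : Prop :=
  ∀ v : V, θ v ≤ ((A ∩ G.neighborSet v).ncard : ℤ) → v ∈ A

/-- The activation closure `[S]_θ`: the smallest activation-closed superset of `S`. -/
def activationClosure {V : Type*} [Fintype V] (G : SimpleGraph V) (θ : V → ℤ)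
    (S : Set V) : Set V :=
  ⋂₀ {A : Set V | S ⊆ A ∧ activationClosed G θ A}

/-- `min-seed(G, θ)`: the minimum size of a target set influencing all of `G`. -/
noncomputable def minSeed {V : Type*} [Fintype V] (G : SimpleGraph V)
    (θ : V → ℤ) : ℕ :=
  sInf {m : ℕ | ∃ S : Set V, activationClosure G θ S = Set.univ ∧ S.ncard = m}

/-- A graph is chordal if it contains no induced cycle of length greater than 3. -/
def IsChordal {V : Type*} (G : SimpleGraph V) : Prop :=
  ∀ n : ℕ, 4 ≤ n → IsEmpty (SimpleGraph.cycleGraph n ↪g G)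

/-- `G` is `t`-connected: more than `t` vertices, and deleting any fewer than `t`
vertices leaves a connected graph. -/
def TConnected {V : Type*} [Fintype V] (G : SimpleGraph V) (t : ℕ) : Prop :=
  t < Fintype.card V ∧
    ∀ K : Set V, K.ncard < t → (G.induce (Kᶜ : Set V)).Connected

namespace MinSeedAux

open SimpleGraph

lemma fin_sub_one (L : ℕ) (hL : 2 ≤ L) (a b : Fin L) :
    (b - a).val = 1 ↔ (b.val = a.val + 1 ∨ (a.val = L - 1 ∧ b.val = 0)) := by
  have ha := a.isLt; have hb := b.isLt
  have h : (b - a).val = (L - a.val + b.val) % L := by rw [Fin.sub_def]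
  rw [h]
  rcases Nat.lt_or_ge (L - a.val + b.val) L with h2 | h2
  · rw [Nat.mod_eq_of_lt h2]; omega
  · rw [Nat.mod_eq_sub_mod h2, Nat.mod_eq_of_lt (by omega)]; omega

lemma no_hole {V : Type*} (G : SimpleGraph V) (hch : IsChordal G) (L : ℕ) (hL : 4 ≤ L)
    (c : ℕ → V)
    (hinj : ∀ i j, i < L → j < L → c i = c j → i = j)
    (hadj : ∀ i, i + 1 < L → G.Adj (c i) (c (i + 1)))
    (hclose : G.Adj (c (L - 1)) (c 0))
    (hnon : ∀ i j, i + 2 ≤ j → j < L → ¬(i = 0 ∧ j = L - 1) → ¬G.Adj (c i) (c j)) :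
    False := by
  have hiff : ∀ x y : Fin L, G.Adj (c x.val) (c y.val) ↔
      (x.val = y.val + 1 ∨ y.val = x.val + 1 ∨ (x.val = 0 ∧ y.val = L - 1) ∨
        (y.val = 0 ∧ x.val = L - 1)) := by
    intro x y
    constructor
    · intro hGadj
      by_contra hc
      push_neg at hc
      obtain ⟨h1, h2, h3, h4⟩ := hc
      rcases Nat.lt_trichotomy x.val y.val with hlt | heq | hgt
      · exact hnon x.val y.val (by omega) y.isLt (by omega) hGadj
      · exact G.irrefl (by rw [heq] at hGadj; exact hGadj)
      · exact hnon y.val x.val (by omega) x.isLt (by omega) hGadj.symm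
    · intro h
      rcases h with h | h | h | h
      · have := hadj y.val (by omega); rw [← h] at this; exact this.symm
      · have := hadj x.val (by omega); rw [← h] at this; exact this
      · rw [h.1, h.2]; exact hclose.symm
      · rw [h.1, h.2]; exact hclose
  have := hch L hL
  apply this.false
  refine ⟨⟨fun i => c i.val, ?_⟩, ?_⟩
  · intro a b hab
    exact Fin.ext (hinj _ _ a.isLt b.isLt hab)
  · intro a b
    show G.Adj (c a.val) (c b.val) ↔ _
    rw [hiff a b, SimpleGraph.cycleGraph_adj', fin_sub_one L (by omega) b a,
      fin_sub_one L (by omega) a b]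
    tauto

lemma core {V : Type*} [Fintype V] (G : SimpleGraph V) (t : ℕ)
    (hconn : TConnected G t) (hch : IsChordal G)
    (X : Finset V) (hXc : X.card < t)
    (u : V) (hu : u ∉ X) (huadj : ∀ x ∈ X, G.Adj x u)
    (T : Set V) (y0 : V) (hy0T : y0 ∈ T) (hy0X : y0 ∉ X)
    (hTadj : ∀ y ∈ T, y ∉ X → ∀ x ∈ X, G.Adj x y) :
    ∃ (s : ℕ) (p : ℕ → V), p 0 = u ∧ p s ∈ T ∧ (∀ i, i < s → p i ∉ T) ∧
      (∀ i, i ≤ s → p i ∉ X) ∧ (∀ i, i < s → G.Adj (p i) (p (i + 1))) ∧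
      (∀ x ∈ X, ∀ i, i ≤ s → G.Adj x (p i)) := by
  classical
  have hconn' := hconn.2 (↑X) (by rw [Set.ncard_coe_finset]; exact hXc)
  have hu' : u ∈ ((↑X : Set V)ᶜ : Set V) := by simpa using hu
  have hy0' : y0 ∈ ((↑X : Set V)ᶜ : Set V) := by simpa using hy0X
  obtain ⟨w⟩ := hconn'.preconnected ⟨u, hu'⟩ ⟨y0, hy0'⟩
  have hQex : ∃ s : ℕ, ∃ p : ℕ → V, p 0 = u ∧ p s ∈ T ∧
      (∀ i, i ≤ s → p i ∉ X) ∧ (∀ i, i < s → G.Adj (p i) (p (i + 1))) := by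
    refine ⟨w.length, fun i => (w.getVert i : V), ?_, ?_, ?_, ?_⟩
    · show (↑(w.getVert 0) : V) = u
      rw [w.getVert_zero]
    · show (↑(w.getVert w.length) : V) ∈ T
      rw [w.getVert_length]; exact hy0T
    · intro i _
      show (↑(w.getVert i) : V) ∉ X
      have h2 := (w.getVert i).2
      simp only [Set.mem_compl_iff, Finset.mem_coe] at h2
      exact h2
    · intro i hi
      have h2 := w.adj_getVert_succ hi
      exact h2
  obtain ⟨p, hp0, hpT, hpX, hpadj⟩ := Nat.find_spec hQex
  set s := Nat.find hQex with hsdef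
  have hmin : ∀ m, m < s → ¬ (∃ p : ℕ → V, p 0 = u ∧ p m ∈ T ∧
      (∀ i, i ≤ m → p i ∉ X) ∧ (∀ i, i < m → G.Adj (p i) (p (i + 1)))) :=
    fun m hm => Nat.find_min hQex hm
  -- interior not in T
  have hint : ∀ i, i < s → p i ∉ T := by
    intro i hi hiT
    exact hmin i hi ⟨p, hp0, hiT, fun j hj => hpX j (by omega), fun j hj => hpadj j (by omega)⟩
  -- injectivity
  have hinj : ∀ i j, i < j → j ≤ s → p i ≠ p j := by
    intro i j hij hjs heq
    have hd : 1 ≤ j - i := by omega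
    apply hmin (s - (j - i)) (by omega)
    refine ⟨fun k => if k ≤ i then p k else p (k + (j - i)), by simp [hp0], ?_, ?_, ?_⟩
    · by_cases hk : s - (j - i) ≤ i
      · have h1 : s - (j - i) = i := by omega
        have h2 : j = s := by omega
        simp only [if_pos hk]
        rw [h1, heq, h2]
        exact hpT
      · simp only [if_neg hk]
        have h1 : s - (j - i) + (j - i) = s := by omega
        rw [h1]; exact hpT
    · intro k hk
      by_cases hki : k ≤ i
      · simp only [if_pos hki]; exact hpX k (by omega)
      · simp only [if_neg hki]; exact hpX (k + (j - i)) (by omega)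
    · intro k hk
      rcases Nat.lt_trichotomy k i with h | h | h
      · simp only [if_pos (by omega : k ≤ i), if_pos (by omega : k + 1 ≤ i)]
        exact hpadj k (by omega)
      · subst h
        have hjlt : j < s := by omega
        simp only [if_pos (le_refl k), if_neg (by omega : ¬ k + 1 ≤ k)]
        have : k + 1 + (j - k) = j + 1 := by omega
        rw [this, heq]
        exact hpadj j hjlt
      · simp only [if_neg (by omega : ¬ k ≤ i), if_neg (by omega : ¬ k + 1 ≤ i)]
        have : k + 1 + (j - i) = (k + (j - i)) + 1 := by omega
        rw [this]
        exact hpadj (k + (j - i)) (by omega)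
  -- induced (no chords)
  have hind : ∀ i j, i + 2 ≤ j → j ≤ s → ¬ G.Adj (p i) (p j) := by
    intro i j hij hjs hadj2
    have hd : 1 ≤ j - i - 1 := by omega
    apply hmin (s - (j - i - 1)) (by omega)
    refine ⟨fun k => if k ≤ i then p k else p (k + (j - i - 1)), by simp [hp0], ?_, ?_, ?_⟩
    · have hk : ¬ (s - (j - i - 1) ≤ i) := by omega
      simp only [if_neg hk]
      have h1 : s - (j - i - 1) + (j - i - 1) = s := by omega
      rw [h1]; exact hpT
    · intro k hk
      by_cases hki : k ≤ i
      · simp only [if_pos hki]; exact hpX k (by omega)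
      · simp only [if_neg hki]; exact hpX (k + (j - i - 1)) (by omega)
    · intro k hk
      rcases Nat.lt_trichotomy k i with h | h | h
      · simp only [if_pos (by omega : k ≤ i), if_pos (by omega : k + 1 ≤ i)]
        exact hpadj k (by omega)
      · subst h
        simp only [if_pos (le_refl k), if_neg (by omega : ¬ k + 1 ≤ k)]
        have : k + 1 + (j - k - 1) = j := by omega
        rw [this]
        exact hadj2
      · simp only [if_neg (by omega : ¬ k ≤ i), if_neg (by omega : ¬ k + 1 ≤ i)]
        have : k + 1 + (j - i - 1) = (k + (j - i - 1)) + 1 := by omega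
        rw [this]
        exact hpadj (k + (j - i - 1)) (by omega)
  -- gap filling
  have hgap : ∀ x ∈ X, ∀ i, i ≤ s → G.Adj x (p i) := by
    intro x hx
    have hx0 : G.Adj x (p 0) := by rw [hp0]; exact huadj x hx
    have hxs : G.Adj x (p s) := hTadj (p s) hpT (hpX s le_rfl) x hx
    have hstep : ∀ i, i < s → G.Adj x (p i) → G.Adj x (p (i + 1)) := by
      intro i his hxi
      have hexj : ∃ j, i < j ∧ j ≤ s ∧ G.Adj x (p j) := ⟨s, his, le_rfl, hxs⟩
      set j := Nat.find hexj with hjdef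
      obtain ⟨hij, hjs, hxj⟩ := Nat.find_spec hexj
      have hjmin : ∀ l, l < j → ¬ (i < l ∧ l ≤ s ∧ G.Adj x (p l)) :=
        fun l hl => Nat.find_min hexj hl
      by_cases hj1 : j = i + 1
      · rw [← hj1]; exact hxj
      · exfalso
        have hj2 : i + 2 ≤ j := by omega
        set L := j - i + 2 with hLdef
        apply no_hole G hch L (by omega) (fun k => if k = 0 then x else p (i + k - 1))
        · intro a b ha hb hab
          by_cases ha0 : a = 0 <;> by_cases hb0 : b = 0
          · omega
          · exfalso
            simp only [if_pos ha0, if_neg hb0] at hab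
            exact (hpX (i + b - 1) (by omega)) (hab ▸ hx)
          · exfalso
            simp only [if_neg ha0, if_pos hb0] at hab
            exact (hpX (i + a - 1) (by omega)) (hab.symm ▸ hx)
          · simp only [if_neg ha0, if_neg hb0] at hab
            rcases Nat.lt_trichotomy (i + a - 1) (i + b - 1) with h | h | h
            · exact absurd hab (hinj _ _ h (by omega))
            · omega
            · exact absurd hab.symm (hinj _ _ h (by omega))
        · intro k hk
          by_cases hk0 : k = 0
          · subst hk0
            simp only [if_pos rfl, if_neg (by omega : ¬ (0:ℕ) + 1 = 0)]
            have : i + (0 + 1) - 1 = i := by omega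
            rw [this]; exact hxi
          · simp only [if_neg hk0, if_neg (by omega : ¬ k + 1 = 0)]
            have h1 : i + (k + 1) - 1 = (i + k - 1) + 1 := by omega
            rw [h1]
            exact hpadj (i + k - 1) (by omega)
        · simp only [if_neg (by omega : ¬ L - 1 = 0), if_pos rfl]
          have : i + (L - 1) - 1 = j := by omega
          rw [this]
          exact hxj.symm
        · intro a b hab hbL hne
          by_cases ha0 : a = 0
          · subst ha0
            simp only [if_pos rfl, if_neg (by omega : ¬ b = 0)]
            intro hadjc
            exact hjmin (i + b - 1) (by omega) ⟨by omega, by omega, hadjc⟩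
          · simp only [if_neg ha0, if_neg (by omega : ¬ b = 0)]
            have : i + b - 1 = (i + a - 1) + (b - a) := by omega
            exact hind (i + a - 1) (i + b - 1) (by omega) (by omega)
    intro i
    induction i with
    | zero => intro _; exact hx0
    | succ n ih => intro hns; exact hstep n (by omega) (ih (by omega))
  exact ⟨s, p, hp0, hpT, hint, hpX, hpadj, hgap⟩

lemma e1s {V : Type*} [Fintype V] [DecidableEq V] (G : SimpleGraph V) (t : ℕ)
    (hconn : TConnected G t) (hch : IsChordal G)
    (K : Finset V) (hKcl : G.IsClique (↑K : Set V)) (hKc : K.card + 1 ≤ t) :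
    ∃ w, w ∉ K ∧ ∀ y ∈ K, G.Adj y w := by
  classical
  by_contra hcon
  push_neg at hcon
  have hcompl : (Finset.univ \ K).Nonempty := by
    rw [Finset.sdiff_nonempty]
    intro hsub
    have h1 := Finset.card_le_card hsub
    rw [Finset.card_univ] at h1
    have h2 := hconn.1
    omega
  obtain ⟨ustar, hustar, hmax⟩ := Finset.exists_max_image (Finset.univ \ K)
      (fun u => (K.filter (fun y => G.Adj y u)).card) hcompl
  have hustarK : ustar ∉ K := (Finset.mem_sdiff.mp hustar).2
  set X := K.filter (fun y => G.Adj y ustar) with hXdef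
  obtain ⟨y0, hy0K, hy0n⟩ := hcon ustar hustarK
  have hy0X : y0 ∉ X := by
    rw [hXdef]
    simp only [Finset.mem_filter, not_and]
    exact fun _ => hy0n
  have hXK : X ⊆ K := Finset.filter_subset _ _
  have hXc : X.card < t := lt_of_le_of_lt (Finset.card_le_card hXK) (by omega)
  obtain ⟨s, p, hp0, hpT, hint, hpX, hpadj, hgap⟩ := core G t hconn hch X hXc ustar
    (fun h => hustarK (hXK h))
    (fun x hx => (Finset.mem_filter.mp hx).2)
    {y : V | y ∈ K ∧ y ∉ X} y0 ⟨hy0K, hy0X⟩ hy0X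
    (fun y hy _ x hx => hKcl (Finset.mem_coe.mpr (hXK hx)) (Finset.mem_coe.mpr hy.1)
      (fun hxy => hy.2 (hxy ▸ hx)))
  have hs1 : 1 ≤ s := by
    rcases Nat.eq_zero_or_pos s with h | h
    · exfalso
      rw [h, hp0] at hpT
      exact hustarK hpT.1
    · exact h
  have hw'K : p (s - 1) ∉ K := by
    intro hK
    exact hint (s - 1) (by omega) ⟨hK, hpX (s - 1) (by omega)⟩
  have hw'univ : p (s - 1) ∈ Finset.univ \ K := Finset.mem_sdiff.mpr ⟨Finset.mem_univ _, hw'K⟩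
  have hsub : insert (p s) X ⊆ K.filter (fun y => G.Adj y (p (s - 1))) := by
    intro y hy
    rcases Finset.mem_insert.mp hy with h | h
    · subst h
      refine Finset.mem_filter.mpr ⟨hpT.1, ?_⟩
      have h2 := hpadj (s - 1) (by omega)
      have h3 : s - 1 + 1 = s := by omega
      rw [h3] at h2
      exact h2.symm
    · exact Finset.mem_filter.mpr ⟨hXK h, hgap y h (s - 1) (by omega)⟩
  have hcard : X.card + 1 ≤ (K.filter (fun y => G.Adj y (p (s - 1)))).card := by
    have h1 : (insert (p s) X).card = X.card + 1 :=
      Finset.card_insert_of_notMem (hpX s le_rfl)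
    rw [← h1]
    exact Finset.card_le_card hsub
  have hle := hmax (p (s - 1)) hw'univ
  omega

lemma grow {V : Type*} [Fintype V] [DecidableEq V] (G : SimpleGraph V) (t : ℕ)
    (hconn : TConnected G t) (hch : IsChordal G) (v : V) :
    ∀ k, 1 ≤ k → k ≤ t → ∃ K : Finset V, v ∈ K ∧ G.IsClique (↑K : Set V) ∧ K.card = k := by
  intro k
  induction k with
  | zero => omega
  | succ n ih =>
    intro _ hkt
    by_cases hn : n = 0
    · subst hn
      exact ⟨{v}, by simp, by simp [SimpleGraph.isClique_iff], by simp⟩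
    · obtain ⟨K, hvK, hKcl, hKc⟩ := ih (by omega) (by omega)
      obtain ⟨w, hwK, hwadj⟩ := e1s G t hconn hch K hKcl (by omega)
      refine ⟨insert w K, Finset.mem_insert_of_mem hvK, ?_, by
        rw [Finset.card_insert_of_notMem hwK, hKc]⟩
      rw [Finset.coe_insert]
      exact hKcl.insert (fun b hb _ => (hwadj b hb).symm)

lemma navP {V : Type*} [Fintype V] [DecidableEq V] (G : SimpleGraph V) (t : ℕ)
    (hconn : TConnected G t) (hch : IsChordal G)
    (P : Set V) (hact : ∀ K : Finset V, (↑K : Set V) ⊆ P → K.card = t →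
      ∀ w : V, (∀ y ∈ K, G.Adj y w) → w ∈ P) :
    ∀ r, 1 ≤ r → ∀ (I K : Finset V) (b : V), I.card + r = t → K.card = t →
      G.IsClique (↑K : Set V) → I ⊆ K → (↑K : Set V) ⊆ P → b ∉ I →
      (∀ x ∈ I, G.Adj x b) →
      ∃ K' : Finset V, K'.card = t ∧ G.IsClique (↑K' : Set V) ∧ (↑K' : Set V) ⊆ P ∧
        b ∈ K' ∧ I ⊆ K' := by
  intro r
  induction r using Nat.strong_induction_on with
  | _ r IH =>
    intro hr I K b hIr hKc hKcl hIK hKP hbI hbadj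
    obtain ⟨x, hxK, hxI⟩ : ∃ x ∈ K, x ∉ I := by
      by_contra h
      push_neg at h
      have := Finset.card_le_card h
      omega
    have hIcl : G.IsClique (↑I : Set V) := hKcl.subset (Finset.coe_subset.mpr hIK)
    have hxadj : ∀ y ∈ I, G.Adj y x := fun y hy =>
      hKcl (Finset.mem_coe.mpr (hIK hy)) (Finset.mem_coe.mpr hxK) (fun h => hxI (h ▸ hy))
    have hTadj : ∀ y ∈ ({b} : Set V), y ∉ I → ∀ z ∈ I, G.Adj z y := by
      intro y hy _ z hz
      rw [Set.mem_singleton_iff] at hy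
      subst hy
      exact hbadj z hz
    obtain ⟨s, p, hp0, hpT, hint, hpX, hpadj, hgap⟩ := core G t hconn hch I (by omega) x hxI
      hxadj {b} b rfl hbI hTadj
    have claim : ∀ i, i ≤ s → ∃ L : Finset V, L.card = t ∧ G.IsClique (↑L : Set V) ∧
        (↑L : Set V) ⊆ P ∧ p i ∈ L ∧ I ⊆ L := by
      intro i
      induction i with
      | zero => exact fun _ => ⟨K, hKc, hKcl, hKP, by rw [hp0]; exact hxK, hIK⟩
      | succ n ihn =>
        intro hns
        obtain ⟨L, hLc, hLcl, hLP, hpnL, hIL⟩ := ihn (by omega)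
        have hpn_adj : G.Adj (p n) (p (n + 1)) := hpadj n (by omega)
        have hpnI : p n ∉ I := hpX n (by omega)
        have hpn1I : p (n + 1) ∉ I := hpX (n + 1) (by omega)
        have hgadj : ∀ y ∈ I, G.Adj y (p (n + 1)) := fun y hy => hgap y hy (n + 1) (by omega)
        by_cases hr1 : r = 1
        · -- L = insert (p n) I
          have hins : insert (p n) I ⊆ L := Finset.insert_subset hpnL hIL
          have hinsc : (insert (p n) I).card = t := by
            rw [Finset.card_insert_of_notMem hpnI]; omega
          have hLeq : L = insert (p n) I :=
            (Finset.eq_of_subset_of_card_le hins (by omega)).symm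
          have hwP : p (n + 1) ∈ P := by
            apply hact L hLP (by omega) (p (n + 1))
            intro y hy
            rw [hLeq] at hy
            rcases Finset.mem_insert.mp hy with h | h
            · subst h; exact hpn_adj
            · exact hgadj y h
          refine ⟨insert (p (n + 1)) I, ?_, ?_, ?_, Finset.mem_insert_self _ _,
            Finset.subset_insert _ _⟩
          · rw [Finset.card_insert_of_notMem hpn1I]; omega
          · rw [Finset.coe_insert]
            exact hIcl.insert (fun y hy _ => (hgadj y hy).symm)
          · rw [Finset.coe_insert]
            intro z hz
            rcases Set.mem_insert_iff.mp hz with h | h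
            · subst h; exact hwP
            · exact hLP (Finset.mem_coe.mpr (hIL (Finset.mem_coe.mp h)))
        · -- r ≥ 2 : use IH at r - 1
          have h2r : 2 ≤ r := by omega
          have hres := IH (r - 1) (by omega) (by omega) (insert (p n) I) L (p (n + 1))
            (by rw [Finset.card_insert_of_notMem hpnI]; omega) hLc hLcl
            (Finset.insert_subset hpnL hIL) hLP
            (by
              intro h
              rcases Finset.mem_insert.mp h with h | h
              · exact hpn_adj.ne' h
              · exact hpn1I h)
            (by
              intro y hy
              rcases Finset.mem_insert.mp hy with h | h
              · subst h; exact hpn_adj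
              · exact hgadj y h)
          obtain ⟨K', h1, h2, h3, h4, h5⟩ := hres
          exact ⟨K', h1, h2, h3, h4, fun z hz => h5 (Finset.mem_insert_of_mem hz)⟩
    obtain ⟨L, hLc, hLcl, hLP, hbL, hIL⟩ := claim s le_rfl
    rw [Set.mem_singleton_iff] at hpT
    rw [hpT] at hbL
    exact ⟨L, hLc, hLcl, hLP, hbL, hIL⟩

end MinSeedAux

theorem minSeed_lt_of_small_threshold {V : Type*} [Fintype V] (G : SimpleGraph V)
    (t : ℕ) (ht : 2 ≤ t) (hconn : TConnected G t) (hchordal : IsChordal G)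
    (θ : V → ℤ) (hθ : ∀ x, θ x ≤ (t : ℤ)) (v : V) (hv : θ v < (t : ℤ)) :
    minSeed G θ < t := by
  classical
  obtain ⟨K0, hvK0, hK0cl, hK0c⟩ := MinSeedAux.grow G t hconn hchordal v t (by omega) le_rfl
  set S : Set V := ↑(K0.erase v) with hSdef
  set P : Set V := activationClosure G θ S with hPdef
  have hSP : S ⊆ P := by
    intro z hz
    apply Set.mem_sInter.mpr
    intro A hA
    exact hA.1 hz
  have hPcl : activationClosed G θ P := by
    intro w hw
    apply Set.mem_sInter.mpr
    intro A hA
    apply hA.2 w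
    refine le_trans hw ?_
    have hsub : P ∩ G.neighborSet w ⊆ A ∩ G.neighborSet w := by
      intro z hz
      exact ⟨Set.sInter_subset_of_mem hA hz.1, hz.2⟩
    exact_mod_cast Set.ncard_le_ncard hsub (Set.toFinite _)
  have hScard : S.ncard = t - 1 := by
    rw [hSdef, Set.ncard_coe_finset, Finset.card_erase_of_mem hvK0, hK0c]
  have hvP : v ∈ P := by
    apply Set.mem_sInter.mpr
    intro A hA
    apply hA.2 v
    have hsub : S ⊆ A ∩ G.neighborSet v := by
      intro z hz
      refine ⟨hA.1 hz, ?_⟩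
      rw [hSdef] at hz
      have hz' := Finset.mem_coe.mp hz
      have hzv := Finset.ne_of_mem_erase hz'
      have hzK := Finset.mem_of_mem_erase hz'
      exact hK0cl (Finset.mem_coe.mpr hvK0) (Finset.mem_coe.mpr hzK) (Ne.symm hzv)
    have h2 : S.ncard ≤ (A ∩ G.neighborSet v).ncard := Set.ncard_le_ncard hsub (Set.toFinite _)
    have h3 : t - 1 ≤ (A ∩ G.neighborSet v).ncard := hScard ▸ h2
    have h4 : ((t : ℤ) - 1) ≤ ((A ∩ G.neighborSet v).ncard : ℤ) := by
      have : ((t - 1 : ℕ) : ℤ) ≤ ((A ∩ G.neighborSet v).ncard : ℤ) := by exact_mod_cast h3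
      omega
    omega
  have hK0P : (↑K0 : Set V) ⊆ P := by
    intro z hz
    by_cases hzv : z = v
    · subst hzv; exact hvP
    · apply hSP
      rw [hSdef]
      exact Finset.mem_coe.mpr (Finset.mem_erase.mpr ⟨hzv, Finset.mem_coe.mp hz⟩)
  have hact : ∀ K : Finset V, (↑K : Set V) ⊆ P → K.card = t →
      ∀ w : V, (∀ y ∈ K, G.Adj y w) → w ∈ P := by
    intro K hKP hKc w hadj
    apply hPcl w
    have hsub : (↑K : Set V) ⊆ P ∩ G.neighborSet w := by
      intro z hz
      exact ⟨hKP hz, (hadj z (Finset.mem_coe.mp hz)).symm⟩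
    have h1 := Set.ncard_le_ncard hsub (Set.toFinite _)
    rw [Set.ncard_coe_finset, hKc] at h1
    calc θ w ≤ (t : ℤ) := hθ w
      _ ≤ ((P ∩ G.neighborSet w).ncard : ℤ) := by exact_mod_cast h1
  have hPuniv : P = Set.univ := by
    apply Set.eq_univ_of_forall
    intro b
    obtain ⟨K', _, _, hK'P, hbK', _⟩ := MinSeedAux.navP G t hconn hchordal P hact t (by omega) ∅ K0 b
      (by simp) hK0c hK0cl (Finset.empty_subset _) hK0P (Finset.notMem_empty _)
      (fun x hx => absurd hx (Finset.notMem_empty _))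
    exact hK'P (Finset.mem_coe.mpr hbK')
  have hmem : (t - 1) ∈ {m : ℕ | ∃ S : Set V, activationClosure G θ S = Set.univ ∧ S.ncard = m} := by
    refine ⟨S, ?_, hScard⟩
    rw [← hPdef]
    exact hPuniv
  have hle : minSeed G θ ≤ t - 1 := Nat.sInf_le hmem
  omega
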